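/- arXiv:2109.14507 — 2 statements merged into one kernel-verified Lean document; each statement's English description precedes it below -/
import Mathlib

section
/- Let Θ be an invertible skew-symmetric real 4×4 matrix and let f, g : ℝ⁴ → ℂ be Schwartz functions. Then for every z ∈ ℝ⁴, (f ×_Θ g)(z) = (2π)^{-4} ∫_{ℝ⁴} f(z + Θη) (Fg)(η) e^{i B(η,z)} dη, where the integral on the right-hand side converges absolutely. -/
noncomputable section

open MeasureTheory Filter Matrix

/-- ℝ⁴ as a Euclidean space. -/
abbrev V4 : Type := EuclideanSpace ℝ (Fin 4)

/-- The Minkowski bilinear form B(x,y) = -x⁰y⁰ + x¹y¹ + x²y² + x³y³. -/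
def minkB (x y : V4) : ℝ := -(x 0 * y 0) + x 1 * y 1 + x 2 * y 2 + x 3 * y 3

/-- Matrix–vector multiplication Θx on ℝ⁴. -/
def thetaAct (Θ : Matrix (Fin 4) (Fin 4) ℝ) (x : V4) : V4 :=
  WithLp.toLp 2 (fun i => ∑ j, Θ i j * x j)

/-- The constant (2π)⁻⁴ as a complex number. -/
def c4 : ℂ := ((((2 * Real.pi) ^ 4)⁻¹ : ℝ) : ℂ)

/-- The Rieffel product (f ×_Θ g)(z) = (2π)⁻⁴ ∬ f(z+Θx) g(z+y) e^{-i B(x,y)} dx dy. -/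
def rieffel (Θ : Matrix (Fin 4) (Fin 4) ℝ) (f g : V4 → ℂ) (z : V4) : ℂ :=
  c4 * ∫ p : V4 × V4, f (z + thetaAct Θ p.1) * g (z + p.2) *
    Complex.exp (-Complex.I * (minkB p.1 p.2 : ℂ))

/-- The Minkowski Fourier transform (Fg)(ξ) = ∫ g(x) e^{-i B(ξ,x)} dx. -/
def minkFT (g : V4 → ℂ) (ξ : V4) : ℂ :=
  ∫ x : V4, g x * Complex.exp (-Complex.I * (minkB ξ x : ℂ))

/- ### Auxiliary lemmas -/

lemma thetaAct_eq_toEuclideanLin (Θ : Matrix (Fin 4) (Fin 4) ℝ) :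
    thetaAct Θ = ⇑(Matrix.toEuclideanLin Θ) := by
  funext x
  ext i
  simp [thetaAct, Matrix.toEuclideanLin_apply, Matrix.mulVec, dotProduct]

lemma thetaAct_continuous (Θ : Matrix (Fin 4) (Fin 4) ℝ) : Continuous (thetaAct Θ) := by
  rw [thetaAct_eq_toEuclideanLin]
  exact (Matrix.toEuclideanLin Θ).continuous_of_finiteDimensional

lemma integrable_comp_linear {A : V4 →ₗ[ℝ] V4} (hA : LinearMap.det A ≠ 0) {F : V4 → ℂ}
    (hF : Integrable F) : Integrable (fun x => F (A x)) := by
  have hcont : Continuous A := A.continuous_of_finiteDimensional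
  have hmap := Measure.map_linearMap_addHaar_eq_smul_addHaar (volume : Measure V4) hA
  have h2 : Integrable F ((volume : Measure V4).map A) := by
    rw [hmap]
    exact hF.smul_measure ENNReal.ofReal_ne_top
  exact (integrable_map_measure (by
    rw [hmap]
    exact hF.aestronglyMeasurable.mono_ac (Measure.absolutelyContinuous_of_le_smul le_rfl))
    hcont.aemeasurable).1 h2

lemma integrable_comp_thetaAct (Θ : Matrix (Fin 4) (Fin 4) ℝ) (hinv : IsUnit Θ)
    {F : V4 → ℂ} (hF : Integrable F) : Integrable (fun x => F (thetaAct Θ x)) := by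
  have hdet : Θ.det ≠ 0 := by
    have := hinv.map (Matrix.detMonoidHom (n := Fin 4) (R := ℝ))
    simpa [isUnit_iff_ne_zero] using this
  have hA : LinearMap.det (Matrix.toEuclideanLin Θ) ≠ 0 := by
    rw [Matrix.toEuclideanLin_eq_toLin, LinearMap.det_toLin]
    exact hdet
  have := integrable_comp_linear hA hF
  simpa [thetaAct_eq_toEuclideanLin] using this

lemma minkB_continuous : Continuous fun p : V4 × V4 => minkB p.1 p.2 := by
  unfold minkB; fun_prop

/-- The inner (y) integral. -/
lemma inner_integral (g : SchwartzMap V4 ℂ) (x z : V4) :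
    ∫ y : V4, g (z + y) * Complex.exp (-Complex.I * (minkB x y : ℂ))
      = minkFT (⇑g) x * Complex.exp (Complex.I * (minkB x z : ℂ)) := by
  have key : ∀ u : V4, minkB x (z + u) - minkB x z = minkB x u := by
    intro u; simp [minkB]; ring
  have h1 : (fun y : V4 => g (z + y) * Complex.exp (-Complex.I * (minkB x y : ℂ)))
      = fun y : V4 => (fun u : V4 =>
          g u * Complex.exp (-Complex.I * ((minkB x u - minkB x z : ℝ) : ℂ))) (z + y) := by
    funext y
    beta_reduce
    rw [key y]
  rw [h1, integral_add_left_eq_self (μ := (volume : Measure V4))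
      (fun u : V4 => g u * Complex.exp (-Complex.I * ((minkB x u - minkB x z : ℝ) : ℂ))) z]
  have h2 : ∀ u : V4, (g u : ℂ) * Complex.exp (-Complex.I * ((minkB x u - minkB x z : ℝ) : ℂ))
      = (g u * Complex.exp (-Complex.I * (minkB x u : ℂ)))
        * Complex.exp (Complex.I * (minkB x z : ℂ)) := by
    intro u
    rw [mul_assoc, ← Complex.exp_add]
    push_cast
    ring_nf
  simp_rw [h2]
  rw [integral_mul_const]
  rfl

/-- single-integral (momentum-space in the second factor) representation of the
Rieffel product: (f ×_Θ g)(z) = (2π)⁻⁴ ∫ f(z+Θη) (Fg)(η) e^{i B(η,z)} dη, with the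
right-hand integrand absolutely integrable. -/
theorem rieffel_single_integral (Θ : Matrix (Fin 4) (Fin 4) ℝ)
    (hinv : IsUnit Θ) (hskew : Θᵀ = -Θ)
    (f g : SchwartzMap V4 ℂ) (z : V4) :
    Integrable (fun η : V4 =>
      f (z + thetaAct Θ η) * minkFT (⇑g) η * Complex.exp (Complex.I * (minkB η z : ℂ))) ∧
    rieffel Θ (⇑f) (⇑g) z =
      c4 * ∫ η : V4, f (z + thetaAct Θ η) * minkFT (⇑g) η *
        Complex.exp (Complex.I * (minkB η z : ℂ)) := by
  set h : V4 × V4 → ℂ := fun p =>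
    f (z + thetaAct Θ p.1) * g (z + p.2) * Complex.exp (-Complex.I * (minkB p.1 p.2 : ℂ))
    with hh
  have hF : Integrable (fun x : V4 => f (z + thetaAct Θ x)) :=
    integrable_comp_thetaAct Θ hinv (f.integrable.comp_add_left z)
  have hG : Integrable (fun y : V4 => g (z + y)) := g.integrable.comp_add_left z
  have hFG : Integrable (fun p : V4 × V4 => f (z + thetaAct Θ p.1) * g (z + p.2)) := by
    rw [Measure.volume_eq_prod V4 V4]
    exact hF.mul_prod hG
  have hcont : Continuous h := by
    apply Continuous.mul
    · exact (f.continuous.comp (continuous_const.add ((thetaAct_continuous Θ).comp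
          continuous_fst))).mul (g.continuous.comp (continuous_const.add continuous_snd))
    · exact Complex.continuous_exp.comp
        (continuous_const.mul (Complex.continuous_ofReal.comp minkB_continuous))
  have h_int : Integrable h := by
    refine hFG.norm.mono' hcont.aestronglyMeasurable (Filter.Eventually.of_forall fun p => ?_)
    rw [hh]
    simp only [norm_mul, norm_norm]
    have : ‖Complex.exp (-Complex.I * (minkB p.1 p.2 : ℂ))‖ = 1 := by
      simp [Complex.norm_exp]
    rw [this, mul_one]
  have h_int' : Integrable h ((volume : Measure V4).prod (volume : Measure V4)) := by
    rwa [← Measure.volume_eq_prod V4 V4]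
  have hpoint : ∀ x : V4, (∫ y : V4, h (x, y))
      = f (z + thetaAct Θ x) * minkFT (⇑g) x * Complex.exp (Complex.I * (minkB x z : ℂ)) := by
    intro x
    simp only [hh]
    simp_rw [mul_assoc]
    rw [integral_const_mul, inner_integral g x z]
  constructor
  · exact (h_int'.integral_prod_left).congr (Filter.Eventually.of_forall hpoint)
  · rw [rieffel]
    congr 1
    rw [show (∫ p : V4 × V4, f (z + thetaAct Θ p.1) * g (z + p.2) *
        Complex.exp (-Complex.I * (minkB p.1 p.2 : ℂ))) = ∫ p : V4 × V4, h p from rfl,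
      Measure.volume_eq_prod V4 V4, MeasureTheory.integral_prod _ h_int']
    exact integral_congr_ae (Filter.Eventually.of_forall hpoint)
end
end

section
/- The Rieffel product has the correct commutative limit: let Θ be an invertible skew-symmetric real 4×4 matrix and let f, g : ℝ⁴ → ℂ be Schwartz functions. Then for every z ∈ ℝ⁴, lim_{t→0⁺} (f ×_{tΘ} g)(z) = f(z)·g(z), where for each t > 0 the matrix tΘ is invertible and skew-symmetric so that f ×_{tΘ} g is given by the absolutely convergent double integral. -/
noncomputable section

open MeasureTheory Filter Matrix

open scoped RealInnerProductSpace FourierTransform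

-- the reflection J
def Jlin : V4 ≃ₗ[ℝ] V4 where
  toFun x := WithLp.toLp 2 (fun i => if i = 0 then -x i else x i)
  invFun x := WithLp.toLp 2 (fun i => if i = 0 then -x i else x i)
  map_add' x y := by
    ext i; by_cases h : i = 0 <;> simp [h, PiLp.add_apply] <;> ring
  map_smul' c x := by
    ext i; by_cases h : i = 0 <;> simp [h, PiLp.smul_apply, smul_eq_mul] <;> ring
  left_inv x := by ext i; by_cases h : i = 0 <;> simp [h]
  right_inv x := by ext i; by_cases h : i = 0 <;> simp [h]

def Jiso : V4 ≃ₗᵢ[ℝ] V4 :=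
  ⟨Jlin, fun x => by
    simp only [EuclideanSpace.norm_eq]
    congr 1
    refine Finset.sum_congr rfl fun i _ => ?_
    by_cases h : i = 0 <;> simp [Jlin, h]⟩

lemma Jiso_apply (x : V4) (i : Fin 4) : Jiso x i = if i = 0 then -x i else x i := rfl

lemma minkB_eq (x y : V4) : minkB x y = ⟪Jiso x, y⟫ := by
  simp [minkB, PiLp.inner_apply, RCLike.inner_apply, conj_trivial, Fin.sum_univ_four,
    Jiso_apply]
  ring

lemma thetaAct_mul (A B : Matrix (Fin 4) (Fin 4) ℝ) (x : V4) :
    thetaAct A (thetaAct B x) = thetaAct (A * B) x := by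
  ext i
  simp only [thetaAct, Matrix.mul_apply, Finset.sum_mul, Finset.mul_sum]
  rw [Finset.sum_comm]
  exact Finset.sum_congr rfl fun j _ => Finset.sum_congr rfl fun k _ => by ring

lemma thetaAct_one (x : V4) : thetaAct 1 x = x := by
  ext i
  simp [thetaAct, Matrix.one_apply]

lemma thetaAct_smul (t : ℝ) (A : Matrix (Fin 4) (Fin 4) ℝ) (x : V4) :
    thetaAct (t • A) x = t • thetaAct A x := by
  ext i
  simp [thetaAct, Finset.mul_sum, PiLp.smul_apply, smul_eq_mul, mul_assoc]

def thetaLin (A : Matrix (Fin 4) (Fin 4) ℝ) : V4 →ₗ[ℝ] V4 where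
  toFun := thetaAct A
  map_add' x y := by
    ext i
    simp [thetaAct, mul_add, Finset.sum_add_distrib, PiLp.add_apply]
  map_smul' c x := by
    ext i
    simp only [thetaAct, PiLp.smul_apply, smul_eq_mul, RingHom.id_apply, Finset.mul_sum]
    exact Finset.sum_congr rfl fun j _ => by ring

def thetaCLE (A : Matrix (Fin 4) (Fin 4) ℝ) (hA : IsUnit A) : V4 ≃L[ℝ] V4 :=
  LinearEquiv.toContinuousLinearEquiv <|
    LinearEquiv.ofLinear (thetaLin A) (thetaLin (↑hA.unit⁻¹))
      (by
        ext x : 1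
        show thetaAct A (thetaAct (↑hA.unit⁻¹) x) = x
        rw [thetaAct_mul]
        have : A * (↑hA.unit⁻¹ : Matrix (Fin 4) (Fin 4) ℝ) = 1 := by
          have h := hA.unit.mul_inv
          rwa [hA.unit_spec] at h
        rw [this, thetaAct_one])
      (by
        ext x : 1
        show thetaAct (↑hA.unit⁻¹) (thetaAct A x) = x
        rw [thetaAct_mul]
        have : (↑hA.unit⁻¹ : Matrix (Fin 4) (Fin 4) ℝ) * A = 1 := by
          have h := hA.unit.inv_mul
          rwa [hA.unit_spec] at h
        rw [this, thetaAct_one])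

lemma thetaCLE_apply (A : Matrix (Fin 4) (Fin 4) ℝ) (hA : IsUnit A) (x : V4) :
    thetaCLE A hA x = thetaAct A x := rfl

lemma htg_add (z : V4) : Function.HasTemperateGrowth (fun y : V4 => z + y) := by
  apply Function.HasTemperateGrowth.of_fderiv (k := 1) (C := ‖z‖ + 1)
  · have h : fderiv ℝ (fun y : V4 => z + y) = fun _ => ContinuousLinearMap.id ℝ V4 := by
      funext y
      exact ((hasFDerivAt_id y).const_add z).fderiv
    rw [h]
    exact .const _
  · exact fun y => ((hasFDerivAt_id y).const_add z).differentiableAt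
  · intro y
    have h1 := norm_add_le z y
    have h2 := norm_nonneg y
    have h3 := norm_nonneg z
    nlinarith

def trCLM (z : V4) : SchwartzMap V4 ℂ →L[ℝ] SchwartzMap V4 ℂ :=
  SchwartzMap.compCLM ℝ (htg_add z)
    ⟨1, ‖z‖ + 1, fun y => by
      have h1 : ‖y‖ ≤ ‖z + y‖ + ‖z‖ := by
        have := norm_add_le (z + y) (-z)
        simpa using this
      have h2 := norm_nonneg (z + y)
      have h3 := norm_nonneg z
      nlinarith⟩

lemma trCLM_apply (z : V4) (g : SchwartzMap V4 ℂ) (y : V4) : trCLM z g y = g (z + y) := rfl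


open Real in
lemma minkFT_eq_fourier (ψ : V4 → ℂ) (x : V4) :
    minkFT ψ x = 𝓕 ψ ((2 * π)⁻¹ • Jiso x) := by
  rw [minkFT, Real.fourier_eq']
  refine integral_congr_ae (Filter.Eventually.of_forall fun v => ?_)
  have hinner : ⟪v, (2 * π)⁻¹ • Jiso x⟫ = (2 * π)⁻¹ * minkB x v := by
    rw [real_inner_smul_right, real_inner_comm, ← minkB_eq]
  dsimp only
  rw [hinner, smul_eq_mul, mul_comm]
  congr 1
  have hπ : (2 * π) ≠ 0 := by positivity
  have : -2 * π * ((2 * π)⁻¹ * minkB x v) = -minkB x v := by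
    field_simp
  rw [this]
  push_cast
  ring_nf

open Real in
lemma integral_fourier_J (ψ : SchwartzMap V4 ℂ) :
    ∫ x : V4, 𝓕 ⇑ψ ((2 * π)⁻¹ • Jiso x) = ((2 * π) ^ 4 : ℝ) • ψ 0 := by
  have hme : MeasurableEmbedding (⇑Jiso) := Jiso.toHomeomorph.measurableEmbedding
  have h1 : ∫ x : V4, 𝓕 ⇑ψ ((2 * π)⁻¹ • Jiso x) = ∫ w : V4, 𝓕 ⇑ψ ((2 * π)⁻¹ • w) :=
    MeasurePreserving.integral_comp Jiso.measurePreserving hme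
      (fun w => 𝓕 ⇑ψ ((2 * π)⁻¹ • w))
  rw [h1, MeasureTheory.Measure.integral_comp_smul volume (fun w => 𝓕 ⇑ψ w) ((2 * π)⁻¹)]
  have h𝓕int : Integrable (𝓕 ⇑ψ) := by
    have := (SchwartzMap.fourierTransformCLM ℝ ψ).integrable (μ := volume)
    rwa [SchwartzMap.fourierTransformCLM_apply, SchwartzMap.fourier_coe] at this
  have hinv : 𝓕⁻ (𝓕 ⇑ψ) 0 = ψ 0 :=
    ψ.integrable.fourierInv_fourier_eq h𝓕int ψ.continuous.continuousAt
  have h2 : 𝓕⁻ (𝓕 ⇑ψ) 0 = ∫ w : V4, 𝓕 ⇑ψ w := by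
    rw [Real.fourierInv_eq]
    simp
  rw [← h2, hinv]
  have hπ : (0 : ℝ) < 2 * π := by positivity
  have : |(((2 * π)⁻¹ : ℝ) ^ Module.finrank ℝ V4)⁻¹| = (2 * π) ^ 4 := by
    rw [finrank_euclideanSpace_fin]
    rw [abs_of_pos (by positivity)]
    rw [← inv_pow, inv_inv]
  rw [this]

open Real in
lemma rieffel_eq (A : Matrix (Fin 4) (Fin 4) ℝ) (hA : IsUnit A)
    (f g : SchwartzMap V4 ℂ) (z : V4) :
    rieffel A ⇑f ⇑g z
      = c4 * ∫ x : V4, f (z + thetaAct A x) * 𝓕 ⇑(trCLM z g) ((2 * π)⁻¹ • Jiso x) := by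
  set Φ : SchwartzMap V4 ℂ :=
    SchwartzMap.compCLMOfContinuousLinearEquiv ℝ (thetaCLE A hA) (trCLM z f) with hΦdef
  have hΦ : ∀ x : V4, Φ x = f (z + thetaAct A x) := fun x => rfl
  have hψ : ∀ y : V4, (trCLM z g) y = g (z + y) := fun y => rfl
  have hunit : ∀ x y : V4, ‖Complex.exp (-Complex.I * (minkB x y : ℂ))‖ = 1 := by
    intro x y
    rw [show -Complex.I * (minkB x y : ℂ) = (↑(-minkB x y)) * Complex.I by push_cast; ring]
    exact Complex.norm_exp_ofReal_mul_I _
  have hB : Continuous fun p : V4 × V4 => minkB p.1 p.2 := by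
    simp only [minkB_eq]
    exact (Jiso.continuous.comp continuous_fst).inner continuous_snd
  have hθ : Continuous fun x : V4 => thetaAct A x := (thetaCLE A hA).continuous
  have hcont : Continuous fun p : V4 × V4 =>
      f (z + thetaAct A p.1) * g (z + p.2) * Complex.exp (-Complex.I * (minkB p.1 p.2 : ℂ)) := by
    exact ((f.continuous.comp (continuous_const.add (hθ.comp continuous_fst))).mul
      (g.continuous.comp (continuous_const.add continuous_snd))).mul
      (Complex.continuous_exp.comp
        ((continuous_const.mul (Complex.continuous_ofReal.comp hB))))
  have h1 : Integrable (fun p : V4 × V4 => Φ p.1 * (trCLM z g) p.2)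
      ((volume : Measure V4).prod volume) :=
    (Φ.integrable (μ := volume)).mul_prod ((trCLM z g).integrable (μ := volume))
  have hFi : Integrable (fun p : V4 × V4 =>
      f (z + thetaAct A p.1) * g (z + p.2) * Complex.exp (-Complex.I * (minkB p.1 p.2 : ℂ)))
      ((volume : Measure V4).prod volume) := by
    refine h1.norm.mono' ?_ (Filter.Eventually.of_forall fun p => ?_)
    · rw [← Measure.volume_eq_prod]
      exact hcont.aestronglyMeasurable
    · rw [norm_mul, hunit, mul_one, hΦ, hψ]
  rw [rieffel]
  congr 1
  rw [Measure.volume_eq_prod, MeasureTheory.integral_prod _ hFi]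
  refine integral_congr_ae (Filter.Eventually.of_forall fun x => ?_)
  dsimp only
  have : ∀ y : V4, f (z + thetaAct A x) * g (z + y) * Complex.exp (-Complex.I * (minkB x y : ℂ))
      = f (z + thetaAct A x) * ((trCLM z g) y * Complex.exp (-Complex.I * (minkB x y : ℂ))) := by
    intro y; rw [hψ]; ring
  rw [show (∫ y : V4, f (z + thetaAct A x) * g (z + y) *
        Complex.exp (-Complex.I * (minkB x y : ℂ)))
      = ∫ y : V4, f (z + thetaAct A x) *
        ((trCLM z g) y * Complex.exp (-Complex.I * (minkB x y : ℂ))) from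
    integral_congr_ae (Filter.Eventually.of_forall this), integral_const_mul]
  congr 1
  rw [← minkFT_eq_fourier]
  rfl


/-- commutative limit of the Rieffel product: (f ×_{tΘ} g)(z) → f(z)·g(z)
as t → 0⁺. -/
theorem rieffel_commutative_limit (Θ : Matrix (Fin 4) (Fin 4) ℝ)
    (hinv : IsUnit Θ) (hskew : Θᵀ = -Θ)
    (f g : SchwartzMap V4 ℂ) (z : V4) :
    Tendsto (fun t : ℝ => rieffel (t • Θ) (⇑f) (⇑g) z)
      (nhdsWithin 0 (Set.Ioi 0)) (nhds (f z * g z)) := by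
  set ψ : SchwartzMap V4 ℂ := trCLM z g with hψdef
  set h : V4 → ℂ := fun x => 𝓕 (⇑ψ : V4 → ℂ) ((2 * Real.pi)⁻¹ • Jiso x) with hdef
  have hπ : ((2 : ℝ) * Real.pi) ≠ 0 := by positivity
  have h𝓕int : Integrable (𝓕 (⇑ψ : V4 → ℂ)) := by
    have := (SchwartzMap.fourierTransformCLM ℝ ψ).integrable (μ := volume)
    rwa [SchwartzMap.fourierTransformCLM_apply, SchwartzMap.fourier_coe] at this
  have h𝓕cont : Continuous (𝓕 (⇑ψ : V4 → ℂ)) := by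
    have := (SchwartzMap.fourierTransformCLM ℝ ψ).continuous
    rwa [SchwartzMap.fourierTransformCLM_apply, SchwartzMap.fourier_coe] at this
  have hint : Integrable h := by
    have h1 : Integrable (fun w : V4 => 𝓕 (⇑ψ : V4 → ℂ) ((2 * Real.pi)⁻¹ • w)) :=
      h𝓕int.comp_smul (inv_ne_zero hπ)
    have h2 := (Jiso.measurePreserving.integrable_comp h1.aestronglyMeasurable).2 h1
    exact h2
  have hcont : Continuous h := h𝓕cont.comp ((continuous_const_smul _).comp Jiso.continuous)
  have hev : ∀ᶠ t in nhdsWithin (0:ℝ) (Set.Ioi 0),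
      rieffel (t • Θ) ⇑f ⇑g z = c4 * ∫ x : V4, f (z + t • thetaAct Θ x) * h x := by
    filter_upwards [self_mem_nhdsWithin] with t ht
    have htne : (t : ℝ) ≠ 0 := ne_of_gt ht
    have hAu : IsUnit (t • Θ) := by
      rw [Matrix.isUnit_iff_isUnit_det] at hinv ⊢
      rw [Matrix.det_smul]
      simp only [isUnit_iff_ne_zero] at hinv ⊢
      exact mul_ne_zero (pow_ne_zero _ htne) hinv
    rw [rieffel_eq (t • Θ) hAu f g z]
    congr 1
    refine integral_congr_ae (Filter.Eventually.of_forall fun x => ?_)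
    dsimp only
    rw [thetaAct_smul]
  have hθc : Continuous fun x : V4 => thetaAct Θ x := (thetaCLE Θ hinv).continuous
  have key : Tendsto (fun t : ℝ => ∫ x : V4, f (z + t • thetaAct Θ x) * h x)
      (nhdsWithin 0 (Set.Ioi 0)) (nhds (∫ x : V4, f z * h x)) := by
    apply tendsto_integral_filter_of_dominated_convergence
      (bound := fun x => (SchwartzMap.seminorm ℝ 0 0 f : ℝ) * ‖h x‖)
    · refine Filter.Eventually.of_forall fun t => ?_
      exact ((f.continuous.comp (continuous_const.add (hθc.const_smul t))).mul
        hcont).aestronglyMeasurable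
    · refine Filter.Eventually.of_forall fun t => Filter.Eventually.of_forall fun x => ?_
      rw [norm_mul]
      exact mul_le_mul_of_nonneg_right (SchwartzMap.norm_le_seminorm ℝ f _) (norm_nonneg _)
    · exact hint.norm.const_mul _
    · refine Filter.Eventually.of_forall fun x => ?_
      have hc : Continuous fun t : ℝ => f (z + t • thetaAct Θ x) * h x :=
        (f.continuous.comp (continuous_const.add (continuous_id.smul continuous_const))).mul
          continuous_const
      have h0 := (hc.tendsto 0).mono_left (nhdsWithin_le_nhds (s := Set.Ioi (0:ℝ)))
      simpa using h0
  have hfin := key.const_mul c4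
  have hval : c4 * ∫ x : V4, f z * h x = f z * g z := by
    rw [integral_const_mul, hdef, integral_fourier_J ψ]
    have hg0 : ψ 0 = g z := by rw [hψdef, trCLM_apply, add_zero]
    rw [hg0, Complex.real_smul, c4]
    have h4 : (((2 * Real.pi) ^ 4 : ℝ) : ℂ) ≠ 0 := by
      norm_cast
      positivity
    have hπc : (Real.pi : ℂ) ≠ 0 := by
      norm_cast
      exact Real.pi_ne_zero
    field_simp
    push_cast
    field_simp
  rw [← hval]
  exact Filter.Tendsto.congr' (hev.mono fun t ht => ht.symm) hfin
end
end
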